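/- arXiv:2208.04387 — 2 statements merged into one kernel-verified Lean document; each statement's English description precedes it below -/
import Mathlib

section
/- A weight w belongs to A₁^{ρ,θ} (i.e., for every cube Q = Q(x,r), (1/|Q|)∫_Q w ≤ C(1 + r/ρ(x))^θ · ess inf_Q w for some constant C) if and only if there is a constant C > 0 such that M^{ρ,θ}w(x) ≤ C w(x) for almost every x, where M^{ρ,θ}w(x) = sup over cubes Q(x₀,r₀) containing x of (1 + r₀/ρ(x₀))^{−θ} (1/|Q|)∫_Q w. -/
open MeasureTheory

noncomputable section

/-- The axis-parallel cube centered at `x` with "radius" `r = √d · ℓ(Q)/2`,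
i.e. side length `2r/√d`. -/
def cube (d : ℕ) (x : EuclideanSpace ℝ (Fin d)) (r : ℝ) :
    Set (EuclideanSpace ℝ (Fin d)) :=
  {y | ∀ i, |y i - x i| ≤ r / Real.sqrt d}

/-- Average `(1/|Q|) ∫_Q w` over the cube `Q(x,r)`. -/
def cubeAvg {d : ℕ} (x : EuclideanSpace ℝ (Fin d)) (r : ℝ)
    (w : EuclideanSpace ℝ (Fin d) → ℝ) : ℝ :=
  (volume (cube d x r)).toReal⁻¹ * ∫ y in cube d x r, w y

/-- Weighted average `(1/u(Q)) ∫_Q v·u` over the cube `Q(x,r)`. -/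
def cubeAvgW {d : ℕ} (x : EuclideanSpace ℝ (Fin d)) (r : ℝ)
    (u v : EuclideanSpace ℝ (Fin d) → ℝ) : ℝ :=
  (∫ y in cube d x r, u y)⁻¹ * ∫ y in cube d x r, v y * u y

/-- Essential infimum of `w` over the cube `Q(x,r)`. -/
def cubeInf {d : ℕ} (x : EuclideanSpace ℝ (Fin d)) (r : ℝ)
    (w : EuclideanSpace ℝ (Fin d) → ℝ) : ℝ :=
  essInf w (volume.restrict (cube d x r))

/-- Essential supremum of `w` over the cube `Q(x,r)`. -/
def cubeSup {d : ℕ} (x : EuclideanSpace ℝ (Fin d)) (r : ℝ)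
    (w : EuclideanSpace ℝ (Fin d) → ℝ) : ℝ :=
  essSup w (volume.restrict (cube d x r))

/-- `ρ` is a critical radius function with constants `C₀ > 0` and `N₀ ≥ 1`:
`C₀⁻¹ ρ(x)(1+|x−y|/ρ(x))^{−N₀} ≤ ρ(y) ≤ C₀ ρ(x)(1+|x−y|/ρ(x))^{N₀/(N₀+1)}`. -/
def IsCRF {d : ℕ} (ρ : EuclideanSpace ℝ (Fin d) → ℝ) (C₀ N₀ : ℝ) : Prop :=
  (∀ x, 0 < ρ x) ∧
    ∀ x y, C₀⁻¹ * ρ x * (1 + dist x y / ρ x) ^ (-N₀) ≤ ρ y ∧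
      ρ y ≤ C₀ * ρ x * (1 + dist x y / ρ x) ^ (N₀ / (N₀ + 1))

/-- A weight: a locally integrable function which is positive a.e. -/
def IsWeight {d : ℕ} (w : EuclideanSpace ℝ (Fin d) → ℝ) : Prop :=
  LocallyIntegrable w volume ∧ ∀ᵐ x ∂(volume : Measure (EuclideanSpace ℝ (Fin d))), 0 < w x

/-- The class `A₁^{ρ,θ}` with explicit constant `C`. -/
def A1C {d : ℕ} (ρ : EuclideanSpace ℝ (Fin d) → ℝ) (θ C : ℝ)
    (w : EuclideanSpace ℝ (Fin d) → ℝ) : Prop :=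
  ∀ x r, 0 < r → cubeAvg x r w ≤ C * (1 + r / ρ x) ^ θ * cubeInf x r w

/-- The class `A₁^{ρ,θ}`. -/
def memA1 {d : ℕ} (ρ : EuclideanSpace ℝ (Fin d) → ℝ) (θ : ℝ)
    (w : EuclideanSpace ℝ (Fin d) → ℝ) : Prop :=
  ∃ C > 0, A1C ρ θ C w

/-- The class `A₁^ρ = ∪_{θ ≥ 0} A₁^{ρ,θ}`. -/
def A1 {d : ℕ} (ρ : EuclideanSpace ℝ (Fin d) → ℝ)
    (w : EuclideanSpace ℝ (Fin d) → ℝ) : Prop :=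
  ∃ θ ≥ 0, memA1 ρ θ w

/-- The class `A_p^{ρ,θ}` (for `1 < p < ∞`) with explicit constant `C`;
here `p' = p/(p-1)`. -/
def ApC {d : ℕ} (ρ : EuclideanSpace ℝ (Fin d) → ℝ) (p θ C : ℝ)
    (w : EuclideanSpace ℝ (Fin d) → ℝ) : Prop :=
  ∀ x r, 0 < r →
    (cubeAvg x r w) ^ (1 / p) *
      (cubeAvg x r fun y => w y ^ (1 - p / (p - 1))) ^ (1 - 1 / p) ≤
        C * (1 + r / ρ x) ^ θ

/-- The class `A_p^{ρ,θ}` for `1 < p < ∞`. -/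
def memAp {d : ℕ} (ρ : EuclideanSpace ℝ (Fin d) → ℝ) (p θ : ℝ)
    (w : EuclideanSpace ℝ (Fin d) → ℝ) : Prop :=
  ∃ C > 0, ApC ρ p θ C w

/-- The class `A_p^ρ = ∪_{θ ≥ 0} A_p^{ρ,θ}` for `1 < p < ∞`. -/
def Ap {d : ℕ} (ρ : EuclideanSpace ℝ (Fin d) → ℝ) (p : ℝ)
    (w : EuclideanSpace ℝ (Fin d) → ℝ) : Prop :=
  ∃ θ ≥ 0, memAp ρ p θ w

/-- The class `A_∞^ρ = ∪_{p > 1} A_p^ρ`. -/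
def Ainf {d : ℕ} (ρ : EuclideanSpace ℝ (Fin d) → ℝ)
    (w : EuclideanSpace ℝ (Fin d) → ℝ) : Prop :=
  ∃ p, 1 < p ∧ Ap ρ p w

/-- The reverse Hölder class `RH_s^{ρ,θ}` with explicit constant `C`. -/
def RHC {d : ℕ} (ρ : EuclideanSpace ℝ (Fin d) → ℝ) (s θ C : ℝ)
    (w : EuclideanSpace ℝ (Fin d) → ℝ) : Prop :=
  ∀ x r, 0 < r →
    (cubeAvg x r fun y => w y ^ s) ^ (1 / s) ≤
      C * (1 + r / ρ x) ^ θ * cubeAvg x r w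

/-- The reverse Hölder class `RH_s^{ρ,θ}`. -/
def memRH {d : ℕ} (ρ : EuclideanSpace ℝ (Fin d) → ℝ) (s θ : ℝ)
    (w : EuclideanSpace ℝ (Fin d) → ℝ) : Prop :=
  ∃ C > 0, RHC ρ s θ C w

/-- The class `RH_s^ρ = ∪_{θ ≥ 0} RH_s^{ρ,θ}`. -/
def RH {d : ℕ} (ρ : EuclideanSpace ℝ (Fin d) → ℝ) (s : ℝ)
    (w : EuclideanSpace ℝ (Fin d) → ℝ) : Prop :=
  ∃ θ ≥ 0, memRH ρ s θ w

/-- The class `RH_∞^{ρ,θ}` with explicit constant `C`. -/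
def RHinfC {d : ℕ} (ρ : EuclideanSpace ℝ (Fin d) → ℝ) (θ C : ℝ)
    (w : EuclideanSpace ℝ (Fin d) → ℝ) : Prop :=
  ∀ x r, 0 < r → cubeSup x r w ≤ C * (1 + r / ρ x) ^ θ * cubeAvg x r w

/-- The class `RH_∞^{ρ,θ}`. -/
def memRHinf {d : ℕ} (ρ : EuclideanSpace ℝ (Fin d) → ℝ) (θ : ℝ)
    (w : EuclideanSpace ℝ (Fin d) → ℝ) : Prop :=
  ∃ C > 0, RHinfC ρ θ C w

/-- The class `RH_∞^ρ = ∪_{θ ≥ 0} RH_∞^{ρ,θ}`. -/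
def RHinf {d : ℕ} (ρ : EuclideanSpace ℝ (Fin d) → ℝ)
    (w : EuclideanSpace ℝ (Fin d) → ℝ) : Prop :=
  ∃ θ ≥ 0, memRHinf ρ θ w

/-- The weighted class `A_p^{ρ,θ}(u)` (for `1 < p < ∞`) with explicit constant `C`. -/
def ApWC {d : ℕ} (ρ u : EuclideanSpace ℝ (Fin d) → ℝ) (p θ C : ℝ)
    (v : EuclideanSpace ℝ (Fin d) → ℝ) : Prop :=
  ∀ x r, 0 < r →
    (cubeAvgW x r u v) ^ (1 / p) *
      (cubeAvgW x r u fun y => v y ^ (1 - p / (p - 1))) ^ (1 - 1 / p) ≤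
        C * (1 + r / ρ x) ^ θ

/-- The weighted class `A_p^{ρ,θ}(u)` for `1 < p < ∞`. -/
def memApW {d : ℕ} (ρ u : EuclideanSpace ℝ (Fin d) → ℝ) (p θ : ℝ)
    (v : EuclideanSpace ℝ (Fin d) → ℝ) : Prop :=
  ∃ C > 0, ApWC ρ u p θ C v

/-- The weighted class `A_p^ρ(u) = ∪_{θ ≥ 0} A_p^{ρ,θ}(u)` for `1 < p < ∞`. -/
def ApW {d : ℕ} (ρ u : EuclideanSpace ℝ (Fin d) → ℝ) (p : ℝ)
    (v : EuclideanSpace ℝ (Fin d) → ℝ) : Prop :=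
  ∃ θ ≥ 0, memApW ρ u p θ v

/-- The weighted class `A₁^{ρ,θ}(u)`. -/
def memA1W {d : ℕ} (ρ u : EuclideanSpace ℝ (Fin d) → ℝ) (θ : ℝ)
    (v : EuclideanSpace ℝ (Fin d) → ℝ) : Prop :=
  ∃ C > 0, ∀ x r, 0 < r → cubeAvgW x r u v ≤ C * (1 + r / ρ x) ^ θ * cubeInf x r v

/-- The weighted class `A₁^ρ(u)`. -/
def A1W {d : ℕ} (ρ u : EuclideanSpace ℝ (Fin d) → ℝ)
    (v : EuclideanSpace ℝ (Fin d) → ℝ) : Prop :=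
  ∃ θ ≥ 0, memA1W ρ u θ v

/-- The weighted class `A_∞^ρ(u) = ∪_{p > 1} A_p^ρ(u)`. -/
def AinfW {d : ℕ} (ρ u : EuclideanSpace ℝ (Fin d) → ℝ)
    (v : EuclideanSpace ℝ (Fin d) → ℝ) : Prop :=
  ∃ p, 1 < p ∧ ApW ρ u p v


/-! ### Auxiliary lemmas -/

section Aux

variable {d : ℕ}

lemma cube_eq (x : EuclideanSpace ℝ (Fin d)) (r : ℝ) :
    cube d x r = ((MeasurableEquiv.toLp 2 (Fin d → ℝ)).symm) ⁻¹'
      (Set.univ.pi fun i => Set.Icc (x i - r / Real.sqrt d) (x i + r / Real.sqrt d)) := by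
  ext y
  simp only [cube, Set.mem_setOf_eq, Set.mem_preimage, Set.mem_pi, Set.mem_univ, true_implies,
    Set.mem_Icc, abs_le, MeasurableEquiv.coe_toLp_symm]
  constructor <;> intro h i <;> have := h i <;> constructor <;> linarith [this.1, this.2]

lemma measurableSet_cube (x : EuclideanSpace ℝ (Fin d)) (r : ℝ) :
    MeasurableSet (cube d x r) := by
  rw [cube_eq]
  exact ((MeasurableEquiv.toLp 2 (Fin d → ℝ)).symm).measurable
    (MeasurableSet.univ_pi fun i => measurableSet_Icc)

lemma volume_cube (x : EuclideanSpace ℝ (Fin d)) (r : ℝ) :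
    volume (cube d x r) = ENNReal.ofReal (2 * (r / Real.sqrt d)) ^ d := by
  rw [cube_eq, (EuclideanSpace.volume_preserving_symm_measurableEquiv_toLp (Fin d)).measure_preimage
    (MeasurableSet.univ_pi fun i => measurableSet_Icc).nullMeasurableSet,
    volume_pi_pi]
  simp [Real.volume_Icc]
  ring_nf
  rw [ENNReal.ofReal_mul' (by norm_num), ENNReal.ofReal_ofNat, mul_pow]

lemma volume_cube_pos (x : EuclideanSpace ℝ (Fin d)) {r : ℝ} (hr : 0 < r) :
    0 < volume (cube d x r) := by
  rw [volume_cube x r]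
  rcases Nat.eq_zero_or_pos d with h | h
  · subst h; simp
  · have : (0:ℝ) < 2 * (r / Real.sqrt d) := by
      have : (0:ℝ) < Real.sqrt d := Real.sqrt_pos.2 (by exact_mod_cast h)
      positivity
    exact ENNReal.pow_pos (ENNReal.ofReal_pos.2 this) d

lemma toReal_volume_cube (x : EuclideanSpace ℝ (Fin d)) {r : ℝ} (hr : 0 ≤ r) :
    (volume (cube d x r)).toReal = (2 * (r / Real.sqrt d)) ^ d := by
  have h2 : (0:ℝ) ≤ 2 * (r / Real.sqrt d) :=
    mul_nonneg (by norm_num) (div_nonneg hr (Real.sqrt_nonneg _))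
  rw [volume_cube x r, ← ENNReal.ofReal_pow h2, ENNReal.toReal_ofReal (pow_nonneg h2 _)]

lemma toReal_volume_cube_pos (x : EuclideanSpace ℝ (Fin d)) {r : ℝ} (hr : 0 < r) :
    0 < (volume (cube d x r)).toReal := by
  rw [toReal_volume_cube x hr.le]
  rcases Nat.eq_zero_or_pos d with h | h
  · subst h; simp
  · have : (0:ℝ) < Real.sqrt d := Real.sqrt_pos.2 (by exact_mod_cast h)
    positivity

lemma isCompact_cube (x : EuclideanSpace ℝ (Fin d)) {r : ℝ} (hr : 0 ≤ r) :
    IsCompact (cube d x r) := by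
  apply Metric.isCompact_of_isClosed_isBounded
  · have : cube d x r = ⋂ i, {y : EuclideanSpace ℝ (Fin d) | |y i - x i| ≤ r / Real.sqrt d} := by
      ext y; simp [cube]
    rw [this]
    exact isClosed_iInter fun i => isClosed_le
      (((EuclideanSpace.proj i : EuclideanSpace ℝ (Fin d) →L[ℝ] ℝ).continuous.sub
        continuous_const).abs) continuous_const
  · apply Bornology.IsBounded.subset (Metric.isBounded_closedBall (x := x) (r := r))
    intro y hy
    simp only [Metric.mem_closedBall]
    rw [EuclideanSpace.dist_eq]
    have h1 : ∑ i, dist (y i) (x i) ^ 2 ≤ d * (r / Real.sqrt d) ^ 2 := by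
      calc ∑ i, dist (y i) (x i) ^ 2 ≤ ∑ _i : Fin d, (r / Real.sqrt d) ^ 2 :=
            Finset.sum_le_sum fun i _ => by
              have := hy i
              rw [Real.dist_eq]
              exact pow_le_pow_left₀ (abs_nonneg _) this 2
        _ = d * (r / Real.sqrt d) ^ 2 := by simp [Finset.sum_const, nsmul_eq_mul]
    calc Real.sqrt (∑ i, dist (y i) (x i) ^ 2) ≤ Real.sqrt (d * (r / Real.sqrt d) ^ 2) :=
          Real.sqrt_le_sqrt h1
      _ ≤ r := by
          rcases Nat.eq_zero_or_pos d with h | h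
          · subst h; simpa using hr
          · have hd : (0:ℝ) < Real.sqrt d := Real.sqrt_pos.2 (by exact_mod_cast h)
            rw [show (d : ℝ) * (r / Real.sqrt d) ^ 2 = r ^ 2 by
              rw [div_pow, Real.sq_sqrt (by positivity)]; field_simp]
            rw [Real.sqrt_sq hr]

lemma dist_coord_le (x y : EuclideanSpace ℝ (Fin d)) (i : Fin d) :
    |x i - y i| ≤ dist x y := by
  rw [EuclideanSpace.dist_eq, ← Real.sqrt_sq (abs_nonneg (x i - y i))]
  apply Real.sqrt_le_sqrt
  rw [sq_abs]
  calc (x i - y i) ^ 2 = dist (x i) (y i) ^ 2 := by rw [Real.dist_eq, sq_abs]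
    _ ≤ ∑ j, dist (x j) (y j) ^ 2 :=
        Finset.single_le_sum (f := fun j => dist (x j) (y j) ^ 2)
          (fun j _ => sq_nonneg _) (Finset.mem_univ i)

lemma le_essInf_of_ae_le_real {α : Type*} [MeasurableSpace α] {μ : Measure α} (hμ : μ ≠ 0)
    {f : α → ℝ} {c : ℝ} (h : ∀ᵐ x ∂μ, c ≤ f x) : c ≤ essInf f μ := by
  rw [essInf_eq_sSup]
  have hmem : μ {x | f x < c} = 0 := by
    rw [ae_iff] at h; simpa [not_le] using h
  obtain ⟨n, hn⟩ : ∃ n : ℕ, μ {x | f x < (n:ℝ)} ≠ 0 := by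
    by_contra hcon
    push_neg at hcon
    apply hμ
    rw [← Measure.measure_univ_eq_zero]
    have huniv : (Set.univ : Set α) = ⋃ n : ℕ, {x | f x < (n:ℝ)} := by
      ext y
      simp only [Set.mem_univ, Set.mem_iUnion, Set.mem_setOf_eq, true_iff]
      exact exists_nat_gt (f y)
    rw [huniv]
    exact measure_iUnion_null hcon
  apply le_csSup
  · refine ⟨n, fun a ha => ?_⟩
    by_contra hna
    push_neg at hna
    exact hn (measure_mono_null (fun y hy => lt_trans hy hna) ha)
  · exact hmem

lemma ae_essInf_le_of_mem {w : EuclideanSpace ℝ (Fin d) → ℝ}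
    (hpos : ∀ᵐ x ∂(volume : Measure (EuclideanSpace ℝ (Fin d))), 0 < w x)
    {s : Set (EuclideanSpace ℝ (Fin d))} (hs : MeasurableSet s) :
    ∀ᵐ x ∂(volume : Measure (EuclideanSpace ℝ (Fin d))),
      x ∈ s → essInf w (volume.restrict s) ≤ w x := by
  have hb : Filter.IsBoundedUnder (· ≥ ·) (ae (volume.restrict s)) w := by
    refine ⟨0, ?_⟩
    rw [Filter.eventually_map]
    exact ae_restrict_of_ae (hpos.mono fun x h => h.le)
  have h := ae_essInf_le (f := w) (μ := volume.restrict s) hb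
  rwa [ae_restrict_iff' hs] at h

lemma inv_mul_le_mul_inv_mul {K v₀ v₁ I : ℝ} (h0 : 0 < v₀) (h1 : 0 < v₁) (hI : 0 ≤ I)
    (hv : v₁ ≤ K * v₀) : v₀⁻¹ * I ≤ K * (v₁⁻¹ * I) := by
  rw [← mul_assoc]
  apply mul_le_mul_of_nonneg_right _ hI
  rw [← div_eq_mul_inv, le_div_iff₀ h1, inv_mul_le_iff₀ h0]
  nlinarith

end Aux

/-- `w ∈ A₁^{ρ,θ}` iff `M^{ρ,θ}w ≤ C w` a.e., i.e. iff there is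
`C > 0` such that for a.e. `x`, every cube `Q(x₀,r₀)` containing `x` satisfies
`(1 + r₀/ρ(x₀))^{−θ} (1/|Q|)∫_Q w ≤ C w(x)`. -/
theorem A1_iff_maximal_bound {d : ℕ} (ρ : EuclideanSpace ℝ (Fin d) → ℝ)
    (C₀ N₀ : ℝ) (hC₀ : 0 < C₀) (hN₀ : 1 ≤ N₀) (hρ : IsCRF ρ C₀ N₀)
    (θ : ℝ) (hθ : 0 ≤ θ) (w : EuclideanSpace ℝ (Fin d) → ℝ) (hw : IsWeight w) :
    memA1 ρ θ w ↔
      ∃ C > 0, ∀ᵐ x ∂(volume : Measure (EuclideanSpace ℝ (Fin d))),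
        ∀ (x₀ : EuclideanSpace ℝ (Fin d)) (r₀ : ℝ), 0 < r₀ → x ∈ cube d x₀ r₀ →
          (1 + r₀ / ρ x₀) ^ (-θ) * cubeAvg x₀ r₀ w ≤ C * w x := by
  have hC₀1 : (1:ℝ) ≤ C₀ := by
    have h := (hρ.2 0 0).2
    have h0 := hρ.1 0
    rw [dist_self, zero_div, add_zero, Real.one_rpow] at h
    nlinarith
  constructor
  · rintro ⟨C, hCpos, hA⟩
    set A : ℝ := C₀⁻¹ * 2 ^ (-N₀) with hA_def
    have hApos : 0 < A := by
      have : (0:ℝ) < (2:ℝ) ^ (-N₀) := Real.rpow_pos_of_pos (by norm_num) _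
      positivity
    have hA1 : A ≤ 1 := by
      have h1 : (2:ℝ) ^ (-N₀) ≤ 1 := by
        rw [show (1:ℝ) = (2:ℝ) ^ (0:ℝ) by simp]
        exact Real.rpow_le_rpow_of_exponent_le (by norm_num) (by linarith)
      have h2 : C₀⁻¹ ≤ 1 := by
        rw [inv_le_one_iff₀]; right; exact hC₀1
      calc A ≤ 1 * 1 := by
            rw [hA_def]
            apply mul_le_mul h2 h1 (le_of_lt (Real.rpow_pos_of_pos (by norm_num) _))
            norm_num
        _ = 1 := by norm_num
    refine ⟨C * 2 ^ d * (2 / A) ^ θ, by positivity, ?_⟩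
    obtain ⟨D, hD⟩ : ∃ D : ℕ → EuclideanSpace ℝ (Fin d), DenseRange D :=
      ⟨_, TopologicalSpace.denseRange_denseSeq _⟩
    have hgood : ∀ᵐ x ∂(volume : Measure (EuclideanSpace ℝ (Fin d))),
        0 < w x ∧ ∀ (n : ℕ) (q : ℚ), 0 < (q:ℝ) → x ∈ cube d (D n) q →
          essInf w (volume.restrict (cube d (D n) q)) ≤ w x := by
      refine hw.2.and ?_
      rw [ae_all_iff]
      intro n
      rw [ae_all_iff]
      intro q
      filter_upwards [ae_essInf_le_of_mem hw.2 (measurableSet_cube (D n) (q:ℝ))] with x hx _ hmem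
      exact hx hmem
    filter_upwards [hgood] with x hx
    rintro x₀ r₀ hr₀ hxQ
    obtain ⟨hwx, hG⟩ := hx
    have hρ₀ : 0 < ρ x₀ := hρ.1 x₀
    have hsd0 : (0:ℝ) ≤ Real.sqrt d := Real.sqrt_nonneg _
    set δ : ℝ := min r₀ (ρ x₀) / (2 * (Real.sqrt d + 1)) with hδdef
    have hδpos : 0 < δ := by
      have : 0 < min r₀ (ρ x₀) := lt_min hr₀ hρ₀
      positivity
    obtain ⟨n, hn⟩ : ∃ n, dist x₀ (D n) < δ := by
      obtain ⟨n, hn⟩ := hD.exists_dist_lt x₀ hδpos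
      exact ⟨n, by simpa [dist_comm] using hn⟩
    set c := D n with hcdef
    have hsdδ : Real.sqrt d * δ ≤ r₀ / 2 := by
      have hm : min r₀ (ρ x₀) ≤ r₀ := min_le_left _ _
      have hden : (0:ℝ) < 2 * (Real.sqrt d + 1) := by positivity
      rw [hδdef, ← mul_div_assoc, div_le_div_iff₀ hden (by norm_num : (0:ℝ) < 2)]
      nlinarith [mul_le_mul_of_nonneg_left hm hsd0]
    have hδρ : δ ≤ ρ x₀ := by
      rw [hδdef]
      calc min r₀ (ρ x₀) / (2 * (Real.sqrt d + 1)) ≤ ρ x₀ / 1 := by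
            apply div_le_div₀ (le_of_lt hρ₀) (min_le_right _ _) one_pos (by linarith)
        _ = ρ x₀ := by norm_num
    have hlt : r₀ + Real.sqrt d * δ < 2 * r₀ := by linarith
    obtain ⟨q, hq1, hq2⟩ := exists_rat_btwn hlt
    have hqpos : (0:ℝ) < q := lt_of_le_of_lt (by positivity) hq1
    have hsub : cube d x₀ r₀ ⊆ cube d c (q:ℝ) := by
      intro y hy i
      have hd1 : (1:ℝ) ≤ Real.sqrt d := by
        rw [show (1:ℝ) = Real.sqrt 1 by simp]
        exact Real.sqrt_le_sqrt (by exact_mod_cast i.pos)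
      have hsd : (0:ℝ) < Real.sqrt d := by linarith
      have h1 := hy i
      have h2 : |x₀ i - c i| ≤ dist x₀ c := dist_coord_le x₀ c i
      calc |y i - c i| ≤ |y i - x₀ i| + |x₀ i - c i| := abs_sub_le _ _ _
        _ ≤ r₀ / Real.sqrt d + δ :=
            add_le_add h1 (le_of_lt (lt_of_le_of_lt h2 hn))
        _ ≤ (q:ℝ) / Real.sqrt d := by
            rw [show r₀ / Real.sqrt d + δ = (r₀ + Real.sqrt d * δ) / Real.sqrt d by
              field_simp]
            exact (div_le_div_iff_of_pos_right hsd).2 hq1.le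
    have hxQ' : x ∈ cube d c (q:ℝ) := hsub hxQ
    -- volume comparison
    have hratio : (volume (cube d c (q:ℝ))).toReal ≤ 2 ^ d * (volume (cube d x₀ r₀)).toReal := by
      rw [toReal_volume_cube _ hqpos.le, toReal_volume_cube _ hr₀.le]
      rw [← mul_pow]
      apply pow_le_pow_left₀ (by positivity)
      rcases eq_or_lt_of_le hsd0 with h | h
      · rw [← h]; norm_num
      · have hqd : (q:ℝ) / Real.sqrt d ≤ 2 * r₀ / Real.sqrt d :=
          (div_le_div_iff_of_pos_right h).2 hq2.le
        rw [mul_div_assoc] at hqd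
        linarith
    have hI1 : IntegrableOn w (cube d c (q:ℝ)) volume :=
      hw.1.integrableOn_isCompact (isCompact_cube c hqpos.le)
    have hInn : (0:ℝ) ≤ ∫ y in cube d c (q:ℝ), w y :=
      integral_nonneg_of_ae (ae_restrict_of_ae (hw.2.mono fun z hz => hz.le))
    have havg1 : cubeAvg x₀ r₀ w ≤ 2 ^ d * cubeAvg c (q:ℝ) w := by
      have hIle : ∫ y in cube d x₀ r₀, w y ≤ ∫ y in cube d c (q:ℝ), w y :=
        setIntegral_mono_set hI1 (ae_restrict_of_ae (hw.2.mono fun z hz => hz.le))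
          (HasSubset.Subset.eventuallyLE hsub)
      unfold cubeAvg
      calc (volume (cube d x₀ r₀)).toReal⁻¹ * ∫ y in cube d x₀ r₀, w y
          ≤ (volume (cube d x₀ r₀)).toReal⁻¹ * ∫ y in cube d c (q:ℝ), w y := by
            apply mul_le_mul_of_nonneg_left hIle
            exact inv_nonneg.2 ENNReal.toReal_nonneg
        _ ≤ 2 ^ d * ((volume (cube d c (q:ℝ))).toReal⁻¹ * ∫ y in cube d c (q:ℝ), w y) :=
            inv_mul_le_mul_inv_mul (toReal_volume_cube_pos x₀ hr₀)
              (toReal_volume_cube_pos c hqpos) hInn hratio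
    have hinf : cubeInf c (q:ℝ) w ≤ w x := hG n q hqpos hxQ'
    have hρc : A * ρ x₀ ≤ ρ c := by
      have h3 := (hρ.2 x₀ c).1
      have hd2 : 1 + dist x₀ c / ρ x₀ ≤ 2 := by
        have : dist x₀ c ≤ ρ x₀ := le_trans (le_of_lt hn) hδρ
        have := div_le_one_of_le₀ this hρ₀.le
        linarith
      have hb : (2:ℝ) ^ (-N₀) ≤ (1 + dist x₀ c / ρ x₀) ^ (-N₀) := by
        apply Real.rpow_le_rpow_of_nonpos ?_ hd2 (by linarith)
        have : 0 ≤ dist x₀ c / ρ x₀ := div_nonneg dist_nonneg hρ₀.le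
        linarith
      calc A * ρ x₀ = C₀⁻¹ * ρ x₀ * (2:ℝ) ^ (-N₀) := by rw [hA_def]; ring
        _ ≤ C₀⁻¹ * ρ x₀ * (1 + dist x₀ c / ρ x₀) ^ (-N₀) := by
            apply mul_le_mul_of_nonneg_left hb
            positivity
        _ ≤ ρ c := h3
    have hρcpos : 0 < ρ c := hρ.1 c
    have h2A : (1:ℝ) ≤ 2 / A := by
      rw [le_div_iff₀ hApos]; linarith
    have hfac : (1 + (q:ℝ) / ρ c) ^ θ ≤ (2 / A) ^ θ * (1 + r₀ / ρ x₀) ^ θ := by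
      rw [← Real.mul_rpow (by positivity) (by positivity)]
      apply Real.rpow_le_rpow (by positivity) ?_ hθ
      have hstep : (q:ℝ) / ρ c ≤ 2 * r₀ / (A * ρ x₀) := by
        apply div_le_div₀ (by positivity) (by linarith) (by positivity) hρc
      calc 1 + (q:ℝ) / ρ c ≤ 1 + 2 * r₀ / (A * ρ x₀) := by linarith
        _ ≤ 2 / A * (1 + r₀ / ρ x₀) := by
            rw [show 2 / A * (1 + r₀ / ρ x₀) = 2 / A + 2 * r₀ / (A * ρ x₀) by
              field_simp]
            linarith
    have h2 := hA c (q:ℝ) hqpos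
    have hkey : cubeAvg x₀ r₀ w ≤ 2 ^ d * (C * ((2 / A) ^ θ * (1 + r₀ / ρ x₀) ^ θ) * w x) := by
      have hfacpos : (0:ℝ) ≤ C * (1 + (q:ℝ) / ρ c) ^ θ := by positivity
      have s1 : cubeAvg c (q:ℝ) w ≤ C * (1 + (q:ℝ) / ρ c) ^ θ * w x := by
        calc cubeAvg c (q:ℝ) w ≤ C * (1 + (q:ℝ) / ρ c) ^ θ * cubeInf c (q:ℝ) w := h2
          _ ≤ C * (1 + (q:ℝ) / ρ c) ^ θ * w x := mul_le_mul_of_nonneg_left hinf hfacpos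
      have s2 : C * (1 + (q:ℝ) / ρ c) ^ θ * w x
          ≤ C * ((2 / A) ^ θ * (1 + r₀ / ρ x₀) ^ θ) * w x := by
        apply mul_le_mul_of_nonneg_right _ hwx.le
        exact mul_le_mul_of_nonneg_left hfac hCpos.le
      calc cubeAvg x₀ r₀ w ≤ 2 ^ d * cubeAvg c (q:ℝ) w := havg1
        _ ≤ 2 ^ d * (C * ((2 / A) ^ θ * (1 + r₀ / ρ x₀) ^ θ) * w x) := by
            apply mul_le_mul_of_nonneg_left (le_trans s1 s2) (by positivity)
    have hbase : (0:ℝ) < 1 + r₀ / ρ x₀ := by positivity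
    rw [Real.rpow_neg hbase.le, inv_mul_le_iff₀ (Real.rpow_pos_of_pos hbase θ)]
    calc cubeAvg x₀ r₀ w ≤ 2 ^ d * (C * ((2 / A) ^ θ * (1 + r₀ / ρ x₀) ^ θ) * w x) := hkey
      _ = (1 + r₀ / ρ x₀) ^ θ * (C * 2 ^ d * (2 / A) ^ θ * w x) := by ring
  · rintro ⟨C, hCpos, hae⟩
    refine ⟨C, hCpos, fun x r hr => ?_⟩
    have hQ := measurableSet_cube x r
    have hμ : volume.restrict (cube d x r) ≠ 0 := by
      intro hcon
      rw [Measure.restrict_eq_zero] at hcon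
      exact (volume_cube_pos x hr).ne' hcon
    have hbase : (0:ℝ) < 1 + r / ρ x := by
      have := hρ.1 x
      positivity
    have h1 : ∀ᵐ y ∂(volume.restrict (cube d x r)),
        C⁻¹ * ((1 + r / ρ x) ^ (-θ) * cubeAvg x r w) ≤ w y := by
      filter_upwards [ae_restrict_of_ae hae, ae_restrict_mem hQ] with y hy hmem
      have := hy x r hr hmem
      rw [inv_mul_le_iff₀ hCpos]
      exact this
    have h5 : C⁻¹ * ((1 + r / ρ x) ^ (-θ) * cubeAvg x r w) ≤ cubeInf x r w :=
      le_essInf_of_ae_le_real hμ h1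
    have hmul := mul_le_mul_of_nonneg_left h5
      (le_of_lt (mul_pos hCpos (Real.rpow_pos_of_pos hbase θ)))
    calc cubeAvg x r w
        = C * (1 + r / ρ x) ^ θ * (C⁻¹ * ((1 + r / ρ x) ^ (-θ) * cubeAvg x r w)) := by
          rw [Real.rpow_neg hbase.le]
          field_simp
        _ ≤ C * (1 + r / ρ x) ^ θ * cubeInf x r w := hmul

end
end

section
/- If w ∈ A₁^ρ, then w^{−r} ∈ RH_∞^ρ for every r > 0. -/
open MeasureTheory

noncomputable section

open Filter Set

namespace Aux

variable {d : ℕ}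

lemma cube_eq (x : EuclideanSpace ℝ (Fin d)) (r : ℝ) :
    cube d x r = (MeasurableEquiv.toLp 2 (Fin d → ℝ)).symm ⁻¹'
      (Set.univ.pi fun i => Set.Icc (x i - r / Real.sqrt d) (x i + r / Real.sqrt d)) := by
  ext y
  simp only [cube, Set.mem_setOf_eq, Set.mem_preimage, Set.mem_univ_pi,
    MeasurableEquiv.coe_toLp_symm, Set.mem_Icc]
  constructor
  · intro h i; have := h i; rw [abs_sub_le_iff] at this; constructor <;> linarith [this.1, this.2]
  · intro h i; have := h i; rw [abs_sub_le_iff]; constructor <;> linarith [this.1, this.2]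

lemma cube_measurableSet (x : EuclideanSpace ℝ (Fin d)) (r : ℝ) :
    MeasurableSet (cube d x r) := by
  rw [cube_eq]
  exact (MeasurableSet.univ_pi fun i => measurableSet_Icc).preimage
    (MeasurableEquiv.toLp 2 (Fin d → ℝ)).symm.measurable

lemma cube_volume (x : EuclideanSpace ℝ (Fin d)) (r : ℝ) :
    volume (cube d x r) = ENNReal.ofReal (2 * (r / Real.sqrt d)) ^ d := by
  rw [cube_eq, (EuclideanSpace.volume_preserving_symm_measurableEquiv_toLp (Fin d)).measure_preimage
    ((MeasurableSet.univ_pi fun i => measurableSet_Icc).nullMeasurableSet)]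
  rw [volume_pi_pi]
  have h : ∀ i : Fin d, volume (Set.Icc (x i - r / Real.sqrt d) (x i + r / Real.sqrt d))
      = ENNReal.ofReal (2 * (r / Real.sqrt d)) := by
    intro i
    rw [Real.volume_Icc]
    congr 1
    ring
  simp [h, Finset.prod_const]

lemma cube_volume_ne_zero (x : EuclideanSpace ℝ (Fin d)) {r : ℝ} (hr : 0 < r) :
    volume (cube d x r) ≠ 0 := by
  rw [cube_volume]
  rcases Nat.eq_zero_or_pos d with hd | hd
  · subst hd; simp
  · have h : (0:ℝ) < 2 * (r / Real.sqrt d) := by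
      have : (0:ℝ) < Real.sqrt d := Real.sqrt_pos.mpr (by exact_mod_cast hd)
      positivity
    exact pow_ne_zero _ (by simp [ENNReal.ofReal_pos.mpr h, ne_of_gt, div_pos hr (Real.sqrt_pos.mpr (by exact_mod_cast hd : (0:ℝ) < d))])

lemma cube_volume_ne_top (x : EuclideanSpace ℝ (Fin d)) (r : ℝ) :
    volume (cube d x r) ≠ ⊤ := by
  rw [cube_volume]
  exact ENNReal.pow_ne_top ENNReal.ofReal_ne_top

lemma cube_isCompact (x : EuclideanSpace ℝ (Fin d)) {r : ℝ} (hr : 0 < r) :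
    IsCompact (cube d x r) := by
  have hclosed : IsClosed (cube d x r) := by
    have : cube d x r = ⋂ i, (fun y : EuclideanSpace ℝ (Fin d) => |y i - x i|) ⁻¹'
        Set.Iic (r / Real.sqrt d) := by
      ext y; simp [cube]
    rw [this]
    refine isClosed_iInter fun i => IsClosed.preimage ?_ isClosed_Iic
    exact (((EuclideanSpace.proj i : EuclideanSpace ℝ (Fin d) →L[ℝ] ℝ).continuous).sub
      continuous_const).abs
  have hsub : cube d x r ⊆ Metric.closedBall x r := by
    intro y hy
    rw [Metric.mem_closedBall, EuclideanSpace.dist_eq]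
    have hsum : ∑ i, dist (y i) (x i) ^ 2 ≤ r ^ 2 := by
      have h1 : ∀ i : Fin d, dist (y i) (x i) ^ 2 ≤ (r / Real.sqrt d) ^ 2 := by
        intro i
        have h2 : dist (y i) (x i) ≤ r / Real.sqrt d := by
          rw [Real.dist_eq]; exact hy i
        exact pow_le_pow_left₀ dist_nonneg h2 2
      calc ∑ i, dist (y i) (x i) ^ 2 ≤ ∑ _i : Fin d, (r / Real.sqrt d) ^ 2 :=
            Finset.sum_le_sum fun i _ => h1 i
        _ = d * (r ^ 2 / d) := by
            rw [Finset.sum_const, Finset.card_univ, Fintype.card_fin, nsmul_eq_mul, div_pow,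
              Real.sq_sqrt (Nat.cast_nonneg d)]
        _ ≤ r ^ 2 := by
            rcases eq_or_ne (d:ℝ) 0 with h | h
            · simp [h]; positivity
            · rw [mul_div_cancel₀ _ h]
    calc Real.sqrt (∑ i, dist (y i) (x i) ^ 2) ≤ Real.sqrt (r ^ 2) := Real.sqrt_le_sqrt hsum
      _ = r := Real.sqrt_sq hr.le
  exact (isCompact_closedBall x r).of_isClosed_subset hclosed hsub

lemma convexOn_rpow_neg {s : ℝ} (hs : 0 < s) :
    ConvexOn ℝ (Set.Ioi (0:ℝ)) fun t : ℝ => t ^ (-s) := by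
  have hderiv : ∀ y ∈ Set.Ioi (0:ℝ), deriv (fun t : ℝ => t ^ (-s)) y = -s * y ^ (-s - 1) := by
    intro y hy
    rw [Real.deriv_rpow_const y (-s)]
  apply convexOn_of_deriv2_nonneg (convex_Ioi 0)
  · intro y hy
    exact (Real.continuousAt_rpow_const y (-s) (Or.inl (ne_of_gt hy))).continuousWithinAt
  · rw [interior_Ioi]
    intro y hy
    exact ((Real.hasDerivAt_rpow_const (p := -s)
      (Or.inl (ne_of_gt hy))).differentiableAt).differentiableWithinAt
  · rw [interior_Ioi]
    intro y hy
    apply DifferentiableAt.differentiableWithinAt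
    have hev : deriv (fun t : ℝ => t ^ (-s)) =ᶠ[nhds y] fun t => -s * t ^ (-s - 1) :=
      Filter.eventuallyEq_of_mem (isOpen_Ioi.mem_nhds hy) hderiv
    refine DifferentiableAt.congr_of_eventuallyEq ?_ hev
    exact ((Real.hasDerivAt_rpow_const (p := -s - 1)
      (Or.inl (ne_of_gt hy))).differentiableAt).const_mul (-s)
  · rw [interior_Ioi]
    intro y hy
    have hev : deriv (fun t : ℝ => t ^ (-s)) =ᶠ[nhds y] fun t => -s * t ^ (-s - 1) :=
      Filter.eventuallyEq_of_mem (isOpen_Ioi.mem_nhds hy) hderiv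
    have h2 : deriv^[2] (fun t : ℝ => t ^ (-s)) y
        = deriv (fun t : ℝ => -s * t ^ (-s - 1)) y := by
      rw [Function.iterate_succ, Function.iterate_one, Function.comp_apply]
      exact hev.deriv_eq
    rw [h2, deriv_const_mul _ ((Real.hasDerivAt_rpow_const (p := -s - 1)
      (Or.inl (ne_of_gt hy))).differentiableAt), Real.deriv_rpow_const y (-s - 1)]
    have : (0:ℝ) ≤ y ^ (-s - 1 - 1) := Real.rpow_nonneg (le_of_lt hy) _
    nlinarith [mul_nonneg (mul_nonneg hs.le (by linarith : (0:ℝ) ≤ s + 1)) this]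

end Aux


/-- If `w ∈ A₁^ρ` then `w^{−r} ∈ RH_∞^ρ` for every `r > 0`. -/
theorem A1_neg_power_in_RHinf {d : ℕ} (ρ : EuclideanSpace ℝ (Fin d) → ℝ)
    (C₀ N₀ : ℝ) (hC₀ : 0 < C₀) (hN₀ : 1 ≤ N₀) (hρ : IsCRF ρ C₀ N₀)
    (w : EuclideanSpace ℝ (Fin d) → ℝ) (hw : IsWeight w) (h : A1 ρ w) :
    ∀ r : ℝ, 0 < r → RHinf ρ (fun x => w x ^ (-r)) := by
  obtain ⟨θ, hθ0, C, hC, hA1⟩ := h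
  intro s hs
  refine ⟨s * θ, mul_nonneg hs.le hθ0, C ^ s, Real.rpow_pos_of_pos hC s, ?_⟩
  intro x t ht
  have hρx : 0 < ρ x := hρ.1 x
  have hKb : (0:ℝ) < 1 + t / ρ x := by positivity
  have hKpos : (0:ℝ) < (1 + t / ρ x) ^ θ := Real.rpow_pos_of_pos hKb θ
  have hCK : (0:ℝ) < C * (1 + t / ρ x) ^ θ := mul_pos hC hKpos
  set Q := cube d x t with hQ
  have hvol0 : volume Q ≠ 0 := Aux.cube_volume_ne_zero x ht
  have hvoltop : volume Q ≠ ⊤ := Aux.cube_volume_ne_top x t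
  have hμ0 : volume.restrict Q ≠ 0 := by
    simpa [Measure.restrict_eq_zero] using hvol0
  haveI : IsFiniteMeasure (volume.restrict Q) :=
    ⟨by rwa [Measure.restrict_apply_univ, lt_top_iff_ne_top]⟩
  have hwint : IntegrableOn w Q volume := hw.1.integrableOn_isCompact (Aux.cube_isCompact x ht)
  have hwpos : ∀ᵐ y ∂(volume.restrict Q), 0 < w y := ae_restrict_of_ae hw.2
  -- the integral of w over Q is positive
  have hintpos : 0 < ∫ y in Q, w y := by
    rw [MeasureTheory.setIntegral_pos_iff_support_of_nonneg_ae
      (hwpos.mono fun y hy => hy.le) hwint]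
    have h1 : volume (Q \ Function.support w) = 0 := by
      have h2 := (ae_restrict_iff' (μ := volume) (Aux.cube_measurableSet x t)
        (p := fun y => 0 < w y)).mp hwpos
      rw [ae_iff] at h2
      refine measure_mono_null (fun y hy => ?_) h2
      simp only [Set.mem_setOf_eq, not_forall]
      exact ⟨hy.1, fun hc => hy.2 (ne_of_gt hc)⟩
    have h2 : volume Q ≤ volume (Function.support w ∩ Q) + volume (Q \ Function.support w) := by
      refine le_trans (measure_mono fun y hy => ?_) (measure_union_le _ _)
      by_cases hmem : y ∈ Function.support w
      · exact Or.inl ⟨hmem, hy⟩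
      · exact Or.inr ⟨hy, hmem⟩
    rw [h1, add_zero] at h2
    exact lt_of_lt_of_le (pos_iff_ne_zero.mpr hvol0) h2
  have hApos : 0 < cubeAvg x t w :=
    mul_pos (inv_pos.mpr (ENNReal.toReal_pos hvol0 hvoltop)) hintpos
  have hA1x := hA1 x t ht
  set m := cubeInf x t w with hm
  have hmpos : 0 < m := by nlinarith [mul_pos hC hKpos]
  have hbdd : IsBoundedUnder (· ≥ ·) (ae (volume.restrict Q)) w :=
    ⟨0, eventually_map.mpr (hwpos.mono fun y hy => hy.le)⟩
  have hmle : ∀ᵐ y ∂(volume.restrict Q), m ≤ w y := ae_essInf_le hbdd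
  -- integrability of w ^ (-s) on Q
  have hgmeas : AEStronglyMeasurable (fun y => w y ^ (-s)) (volume.restrict Q) :=
    (hwint.aestronglyMeasurable.aemeasurable.pow aemeasurable_const).aestronglyMeasurable
  have hgint : IntegrableOn (fun y => w y ^ (-s)) Q volume := by
    refine Integrable.mono' (integrable_const (m ^ (-s))) hgmeas ?_
    filter_upwards [hmle] with y hy
    rw [Real.norm_eq_abs, abs_of_nonneg (Real.rpow_nonneg (le_trans hmpos.le hy) _)]
    exact Real.rpow_le_rpow_of_nonpos hmpos hy (by linarith)
  -- Jensen's inequality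
  have hJensen : (cubeAvg x t w) ^ (-s) ≤ cubeAvg x t (fun y => w y ^ (-s)) := by
    have hconv : ConvexOn ℝ (Set.Ici m) fun u : ℝ => u ^ (-s) :=
      (Aux.convexOn_rpow_neg hs).subset (fun u hu => lt_of_lt_of_le hmpos hu) (convex_Ici m)
    have hcont : ContinuousOn (fun u : ℝ => u ^ (-s)) (Set.Ici m) := fun u hu =>
      (Real.continuousAt_rpow_const u (-s)
        (Or.inl (ne_of_gt (lt_of_lt_of_le hmpos hu)))).continuousWithinAt
    have hJ := hconv.map_set_average_le hcont isClosed_Ici hvol0 hvoltop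
      (hmle.mono fun y hy => hy) hwint hgint
    rwa [setAverage_eq, setAverage_eq, smul_eq_mul, smul_eq_mul] at hJ
  -- essential supremum bound
  have hsupb : cubeSup x t (fun y => w y ^ (-s)) ≤ m ^ (-s) := by
    haveI : (ae (volume.restrict Q)).NeBot := ae_neBot.mpr hμ0
    have hcb : IsBoundedUnder (· ≥ ·) (ae (volume.restrict Q)) (fun y => w y ^ (-s)) :=
      ⟨0, eventually_map.mpr (hwpos.mono fun y hy => Real.rpow_nonneg hy.le _)⟩
    refine Filter.limsup_le_of_le hcb.isCoboundedUnder_le ?_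
    filter_upwards [hmle] with y hy
    exact Real.rpow_le_rpow_of_nonpos hmpos hy (by linarith)
  -- combine
  have h1 : (C * (1 + t / ρ x) ^ θ)⁻¹ * cubeAvg x t w ≤ m := by
    rw [inv_mul_le_iff₀ hCK]
    exact hA1x
  have h2 : m ^ (-s) ≤ ((C * (1 + t / ρ x) ^ θ)⁻¹ * cubeAvg x t w) ^ (-s) :=
    Real.rpow_le_rpow_of_nonpos (mul_pos (inv_pos.mpr hCK) hApos) h1 (by linarith)
  have h3 : ((C * (1 + t / ρ x) ^ θ)⁻¹ * cubeAvg x t w) ^ (-s)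
      = (C * (1 + t / ρ x) ^ θ) ^ s * (cubeAvg x t w) ^ (-s) := by
    rw [Real.mul_rpow (inv_nonneg.mpr hCK.le) hApos.le, Real.inv_rpow hCK.le,
      Real.rpow_neg hCK.le, inv_inv]
  have h4 : (C * (1 + t / ρ x) ^ θ) ^ s = C ^ s * (1 + t / ρ x) ^ (s * θ) := by
    rw [Real.mul_rpow hC.le hKpos.le, ← Real.rpow_mul hKb.le, mul_comm θ s]
  calc cubeSup x t (fun y => w y ^ (-s)) ≤ m ^ (-s) := hsupb
    _ ≤ (C * (1 + t / ρ x) ^ θ) ^ s * (cubeAvg x t w) ^ (-s) := by rw [← h3]; exact h2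
    _ ≤ (C * (1 + t / ρ x) ^ θ) ^ s * cubeAvg x t (fun y => w y ^ (-s)) :=
        mul_le_mul_of_nonneg_left hJensen (Real.rpow_nonneg hCK.le s)
    _ = C ^ s * (1 + t / ρ x) ^ (s * θ) * cubeAvg x t (fun y => w y ^ (-s)) := by rw [h4]


end
end
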